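/- Fix a real parameter g with −2 < g < 2 and set h = √(1 − g²/4), G = g/h. Then for every (b₀,q₀) with q₀ > 0, the function q ↦ K(b₀,q)² is differentiable at q₀ with derivative 2·q₀·K(b₀,q₀)² / B(b₀,q₀). (This is the (q-component of the) formula y_i = (u_i + g·q·b_i)·K²/B for the covariant tangent vector.) -/

import Mathlib

noncomputable def finsH (g : ℝ) : ℝ := Real.sqrt (1 - g ^ 2 / 4)

noncomputable def finsG (g : ℝ) : ℝ := g / finsH g

/-- The characteristic quadratic form `B(b,q) = b² + g·q·b + q²`. -/
noncomputable def finsB (g b q : ℝ) : ℝ := b ^ 2 + g * q * b + q ^ 2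

/-- `L(b,q) = q + (g/2)·b`. -/
noncomputable def finsL (g b q : ℝ) : ℝ := q + (g / 2) * b

/-- The piecewise-defined Finsleroid function `f` on the half-plane `q > 0`. -/
noncomputable def finsF (g b q : ℝ) : ℝ :=
  if 0 < b then -Real.arctan (finsG g / 2) + Real.arctan (finsL g b q / (finsH g * b))
  else if b < 0 then
    Real.pi - Real.arctan (finsG g / 2) + Real.arctan (finsL g b q / (finsH g * b))
  else Real.pi / 2 - Real.arctan (finsG g / 2)

/-- The Finsleroid-regular metric function `K(b,q) = √(B(b,q))·exp(−(G/2)·f(b,q))`. -/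
noncomputable def finsK (g b q : ℝ) : ℝ :=
  Real.sqrt (finsB g b q) * Real.exp (-(finsG g / 2) * finsF g b q)

/-- for `q₀ > 0`, the function `q ↦ K(b₀,q)²` is differentiable at
`q₀` with derivative `2·q₀·K(b₀,q₀)² / B(b₀,q₀)`. -/
theorem finsleroid_Ksq_deriv_q (g : ℝ) (hg1 : -2 < g) (hg2 : g < 2)
    (b₀ q₀ : ℝ) (hq : 0 < q₀) :
    HasDerivAt (fun q : ℝ => (finsK g b₀ q) ^ 2)
      (2 * q₀ * (finsK g b₀ q₀) ^ 2 / finsB g b₀ q₀) q₀ := by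
  have hhsq : (finsH g) ^ 2 = 1 - g ^ 2 / 4 := by
    rw [finsH, Real.sq_sqrt]; nlinarith
  have hhpos : 0 < finsH g := by
    rw [finsH]; apply Real.sqrt_pos.mpr; nlinarith
  have hGh : finsG g * finsH g = g := by
    rw [finsG]; field_simp
  have hBnn : ∀ q : ℝ, 0 ≤ finsB g b₀ q := by
    intro q
    have h1 : finsB g b₀ q = (q + g / 2 * b₀) ^ 2 + (finsH g) ^ 2 * b₀ ^ 2 := by
      rw [hhsq, finsB]; ring
    rw [h1]; positivity
  have hBpos : 0 < finsB g b₀ q₀ := by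
    rcases eq_or_ne b₀ 0 with hb | hb
    · rw [finsB, hb]; nlinarith
    · have h1 : finsB g b₀ q₀ = (q₀ + g / 2 * b₀) ^ 2 + (finsH g) ^ 2 * b₀ ^ 2 := by
        rw [hhsq, finsB]; ring
      rw [h1]; positivity
  have hK2 : ∀ q : ℝ, (finsK g b₀ q) ^ 2
      = finsB g b₀ q * Real.exp (-finsG g * finsF g b₀ q) := by
    intro q
    rw [finsK, mul_pow, Real.sq_sqrt (hBnn q)]
    congr 1
    rw [sq, ← Real.exp_add]
    congr 1
    ring
  have hfun : (fun q : ℝ => (finsK g b₀ q) ^ 2)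
      = fun q : ℝ => finsB g b₀ q * Real.exp (-finsG g * finsF g b₀ q) := funext hK2
  rw [hfun, hK2]
  have hB' : HasDerivAt (fun q : ℝ => finsB g b₀ q) (g * b₀ + 2 * q₀) q₀ := by
    have h1 : HasDerivAt (fun q : ℝ => b₀ ^ 2 + g * q * b₀ + q ^ 2)
        (0 + g * 1 * b₀ + ↑2 * q₀ ^ 1) q₀ :=
      ((hasDerivAt_const q₀ (b₀ ^ 2)).add
        (((hasDerivAt_id q₀).const_mul g).mul_const b₀)).add (hasDerivAt_pow 2 q₀)
    convert h1 using 1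
    · rfl
    · norm_num
  rcases eq_or_ne b₀ 0 with hb | hb
  · subst hb
    have hFc : ∀ q : ℝ, finsF g 0 q = Real.pi / 2 - Real.arctan (finsG g / 2) := by
      intro q; rw [finsF]; simp
    simp only [hFc]
    have h3 := hB'.mul_const (Real.exp (-finsG g * (Real.pi / 2 - Real.arctan (finsG g / 2))))
    refine h3.congr_deriv ?_
    symm
    have hB0 : finsB g 0 q₀ ≠ 0 := hBpos.ne'
    field_simp
    ring
  · have hhb : finsH g * b₀ ≠ 0 := mul_ne_zero hhpos.ne' hb
    have hu : HasDerivAt (fun q : ℝ => finsL g b₀ q / (finsH g * b₀)) (1 / (finsH g * b₀)) q₀ := by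
      have h1 : HasDerivAt (fun q : ℝ => finsL g b₀ q) 1 q₀ := by
        simpa [finsL] using (hasDerivAt_id q₀).add_const (g / 2 * b₀)
      exact h1.div_const _
    have hkey : (finsH g * b₀) ^ 2 + finsL g b₀ q₀ ^ 2 = finsB g b₀ q₀ := by
      rw [finsL, finsB, mul_pow, hhsq]; ring
    have harc : HasDerivAt (fun q : ℝ => Real.arctan (finsL g b₀ q / (finsH g * b₀)))
        (finsH g * b₀ / finsB g b₀ q₀) q₀ := by
      have h2 := (Real.hasDerivAt_arctan (finsL g b₀ q₀ / (finsH g * b₀))).comp q₀ hu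
      have hden : 0 < (finsH g * b₀) ^ 2 + finsL g b₀ q₀ ^ 2 := by rw [hkey]; exact hBpos
      refine h2.congr_deriv ?_
      symm
      rw [div_pow, ← hkey]
      field_simp
    have hF' : HasDerivAt (fun q : ℝ => finsF g b₀ q) (finsH g * b₀ / finsB g b₀ q₀) q₀ := by
      rcases lt_or_gt_of_ne hb with hneg | hpos
      · have heq : (fun q : ℝ => finsF g b₀ q)
            = fun q : ℝ => (Real.pi - Real.arctan (finsG g / 2))
                + Real.arctan (finsL g b₀ q / (finsH g * b₀)) := by
          funext q
          rw [finsF, if_neg (by linarith), if_pos hneg]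
        rw [heq]
        exact harc.const_add _
      · have heq : (fun q : ℝ => finsF g b₀ q)
            = fun q : ℝ => (-Real.arctan (finsG g / 2))
                + Real.arctan (finsL g b₀ q / (finsH g * b₀)) := by
          funext q
          rw [finsF, if_pos hpos]
        rw [heq]
        exact harc.const_add _
    have hE' : HasDerivAt (fun q : ℝ => Real.exp (-finsG g * finsF g b₀ q))
        (-finsG g * (finsH g * b₀ / finsB g b₀ q₀)
          * Real.exp (-finsG g * finsF g b₀ q₀)) q₀ := by
      have h3 := (hF'.const_mul (-finsG g)).exp
      convert h3 using 1
      ring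
    have h4 := hB'.mul hE'
    have hB0 : finsB g b₀ q₀ ≠ 0 := hBpos.ne'
    set E := Real.exp (-finsG g * finsF g b₀ q₀) with hE
    refine h4.congr_deriv ?_
    symm
    field_simp
    linear_combination (b₀ * E) * hGh
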